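/- For non-negative integers m1, n1 with min(m1,n1) ≥ 2, let ³T(m1, n1) be the disjoint union of Y¹ = {(b,c,y) ∈ Z_+^3 : 2b+c+y ≤ n1, c ≤ 1, c+2b+2y ≤ m1, y+b ≥ 0} and Y² = {(a,y) ∈ Z_+^2 : a−y < n1−m1, a+2y < m1} (the case m2 = 0). Then |³T(m1,n1)| = |³T(m1−2, n1−1)| + min(n1, 2m1) + 1. -/
import Mathlib


/-- Y¹ component of ³T^G in the case m2 = 0. -/
def Y1G (m1 n1 : ℤ) : Set (ℤ × ℤ × ℤ) :=
  {p | 0 ≤ p.1 ∧ 0 ≤ p.2.1 ∧ 0 ≤ p.2.2 ∧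
    2 * p.1 + p.2.1 + p.2.2 ≤ n1 ∧ p.2.1 ≤ 1 ∧
    p.2.1 + 2 * p.1 + 2 * p.2.2 ≤ m1 ∧ 0 ≤ p.2.2 + p.1}

/-- Y² component of ³T^G in the case m2 = 0. -/
def Y2G (m1 n1 : ℤ) : Set (ℤ × ℤ) :=
  {p | 0 ≤ p.1 ∧ 0 ≤ p.2 ∧ p.1 - p.2 < n1 - m1 ∧ p.1 + 2 * p.2 < m1}

lemma y1_fin (m n : ℤ) : (Y1G m n).Finite := by
  apply Set.Finite.subset
    (((Set.finite_Icc (0:ℤ) (max n 0)).prod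
      ((Set.finite_Icc (0:ℤ) 1).prod (Set.finite_Icc (0:ℤ) (max n 0)))))
  rintro ⟨b, c, y⟩ hp
  simp only [Y1G, Set.mem_setOf_eq] at hp
  simp only [Set.mem_prod, Set.mem_Icc]
  omega

lemma y2_fin (m n : ℤ) : (Y2G m n).Finite := by
  apply Set.Finite.subset
    ((Set.finite_Icc (0:ℤ) (max m 0)).prod (Set.finite_Icc (0:ℤ) (max m 0)))
  rintro ⟨a, y⟩ hp
  simp only [Y2G, Set.mem_setOf_eq] at hp
  simp only [Set.mem_prod, Set.mem_Icc]
  omega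

lemma y1_rec (m n : ℤ) :
    (Y1G m n).ncard =
      (Y1G (m - 2) (n - 1)).ncard + (Y1G m n ∩ {p | p.2.2 = 0}).ncard := by
  have himg : Y1G m n =
      ((fun p : ℤ × ℤ × ℤ => (p.1, p.2.1, p.2.2 + 1)) '' Y1G (m - 2) (n - 1)) ∪
        (Y1G m n ∩ {p | p.2.2 = 0}) := by
    ext ⟨b, c, y⟩
    simp only [Y1G, Set.mem_union, Set.mem_inter_iff, Set.mem_setOf_eq, Set.mem_image,
      Prod.exists, Prod.mk.injEq]
    constructor
    · rintro ⟨hb, hc, hy, h1, h2, h3, h4⟩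
      rcases eq_or_lt_of_le hy with hy0 | hy1
      · exact Or.inr ⟨⟨hb, hc, hy, h1, h2, h3, h4⟩, hy0.symm⟩
      · exact Or.inl ⟨b, c, y - 1, by omega, by omega⟩
    · rintro (⟨b', c', y', hmem, hb', hc', hy'⟩ | ⟨hmem, _⟩)
      · omega
      · exact hmem
  have hinj : Function.Injective (fun p : ℤ × ℤ × ℤ => (p.1, p.2.1, p.2.2 + 1)) := by
    rintro ⟨a, b, c⟩ ⟨d, e, f⟩ hpq
    simp only [Prod.mk.injEq] at hpq ⊢
    omega
  have hdisj : Disjoint ((fun p : ℤ × ℤ × ℤ => (p.1, p.2.1, p.2.2 + 1)) '' Y1G (m - 2) (n - 1))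
      (Y1G m n ∩ {p | p.2.2 = 0}) := by
    rw [Set.disjoint_left]
    rintro ⟨b, c, y⟩ ⟨⟨b', c', y'⟩, hmem, heq⟩ ⟨-, hy0⟩
    simp only [Y1G, Set.mem_setOf_eq] at hmem
    simp only [Prod.mk.injEq] at heq
    simp only [Set.mem_setOf_eq] at hy0
    omega
  conv_lhs => rw [himg]
  rw [Set.ncard_union_eq hdisj ((y1_fin _ _).image _) ((y1_fin m n).inter_of_left _),
    Set.ncard_image_of_injective _ hinj]

lemma y2_rec (m n : ℤ) :
    (Y2G m n).ncard =
      (Y2G (m - 2) (n - 1)).ncard + (Y2G m n ∩ {p | p.2 = 0}).ncard := by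
  have himg : Y2G m n =
      ((fun p : ℤ × ℤ => (p.1, p.2 + 1)) '' Y2G (m - 2) (n - 1)) ∪
        (Y2G m n ∩ {p | p.2 = 0}) := by
    ext ⟨a, y⟩
    simp only [Y2G, Set.mem_union, Set.mem_inter_iff, Set.mem_setOf_eq, Set.mem_image,
      Prod.exists, Prod.mk.injEq]
    constructor
    · rintro ⟨ha, hy, h1, h2⟩
      rcases eq_or_lt_of_le hy with hy0 | hy1
      · exact Or.inr ⟨⟨ha, hy, h1, h2⟩, hy0.symm⟩
      · exact Or.inl ⟨a, y - 1, by omega, by omega⟩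
    · rintro (⟨a', y', hmem, ha', hy'⟩ | ⟨hmem, _⟩)
      · omega
      · exact hmem
  have hinj : Function.Injective (fun p : ℤ × ℤ => (p.1, p.2 + 1)) := by
    rintro ⟨a, b⟩ ⟨c, d⟩ hpq
    simp only [Prod.mk.injEq] at hpq ⊢
    omega
  have hdisj : Disjoint ((fun p : ℤ × ℤ => (p.1, p.2 + 1)) '' Y2G (m - 2) (n - 1))
      (Y2G m n ∩ {p | p.2 = 0}) := by
    rw [Set.disjoint_left]
    rintro ⟨a, y⟩ ⟨⟨a', y'⟩, hmem, heq⟩ ⟨-, hy0⟩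
    simp only [Y2G, Set.mem_setOf_eq] at hmem
    simp only [Prod.mk.injEq] at heq
    simp only [Set.mem_setOf_eq] at hy0
    omega
  conv_lhs => rw [himg]
  rw [Set.ncard_union_eq hdisj ((y2_fin _ _).image _) ((y2_fin m n).inter_of_left _),
    Set.ncard_image_of_injective _ hinj]

lemma y1_slice (m n : ℤ) :
    (Y1G m n ∩ {p | p.2.2 = 0}).ncard = (min m n + 1).toNat := by
  have hset : Y1G m n ∩ {p | p.2.2 = 0} =
      ↑((Finset.Icc (0:ℤ) (min m n)).image
        (fun t => ((t / 2, t % 2, 0) : ℤ × ℤ × ℤ))) := by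
    ext ⟨b, c, y⟩
    simp only [Y1G, Set.mem_inter_iff, Set.mem_setOf_eq, Finset.coe_image,
      Set.mem_image, Finset.mem_coe, Finset.mem_Icc, Prod.mk.injEq]
    constructor
    · rintro ⟨⟨hb, hc, hy, h1, h2, h3, h4⟩, hy0⟩
      exact ⟨2 * b + c, by omega, by omega, by omega, by omega⟩
    · rintro ⟨t, ⟨ht0, ht1⟩, hb, hc, hy⟩
      refine ⟨⟨by omega, by omega, by omega, by omega, by omega, by omega, by omega⟩, by omega⟩
  rw [hset, Set.ncard_coe_finset, Finset.card_image_of_injOn, Int.card_Icc]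
  · omega
  · intro s hs t ht hst
    simp only [Prod.mk.injEq] at hst
    omega

lemma y2_slice (m n : ℤ) :
    (Y2G m n ∩ {p | p.2 = 0}).ncard = (min (n - m) m).toNat := by
  have hset : Y2G m n ∩ {p | p.2 = 0} =
      ↑((Finset.Ico (0:ℤ) (min (n - m) m)).image (fun a => ((a, 0) : ℤ × ℤ))) := by
    ext ⟨a, y⟩
    simp only [Y2G, Set.mem_inter_iff, Set.mem_setOf_eq, Finset.coe_image,
      Set.mem_image, Finset.mem_coe, Finset.mem_Ico, Prod.mk.injEq]
    constructor
    · rintro ⟨⟨ha, hy, h1, h2⟩, hy0⟩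
      exact ⟨a, ⟨by omega, by omega⟩, rfl, by omega⟩
    · rintro ⟨a', ⟨ha0, ha1⟩, ha, hy⟩
      exact ⟨⟨by omega, by omega, by omega, by omega⟩, by omega⟩
  rw [hset, Set.ncard_coe_finset, Finset.card_image_of_injOn, Int.card_Ico]
  · omega
  · intro s hs t ht hst
    simp only [Prod.mk.injEq] at hst
    exact hst.1

/-- Recursion |³T(m1,n1)| = |³T(m1-2,n1-1)| + min(n1,2m1) + 1 for min(m1,n1) ≥ 2. -/
theorem stmt_16 (m1 n1 : ℤ) (h : 2 ≤ min m1 n1) :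
    ((Y1G m1 n1).ncard + (Y2G m1 n1).ncard : ℤ) =
      ((Y1G (m1 - 2) (n1 - 1)).ncard + (Y2G (m1 - 2) (n1 - 1)).ncard : ℤ) +
        min n1 (2 * m1) + 1 := by
  rw [y1_rec m1 n1, y2_rec m1 n1, y1_slice m1 n1, y2_slice m1 n1]
  push_cast
  omega
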